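/- Let w : [0,1] → [0,1] be continuous with w(0) = 0, and let δ ∈ [0,1). Then sup over Borel probability measures F on [0,1] of ( ∫ w(x) dF(x) ) / ( 1 − δ (1 − ∫ x dF(x)) ) equals max_{x ∈ [0,1]} w(x) / (1 − δ(1 − x)); in particular the supremum over measures is attained by a Dirac measure at any maximizer x* of x ↦ w(x)/(1 − δ(1 − x)). -/
import Mathlib


open Set MeasureTheory

/-- For continuous `w : [0,1] → [0,1]` with `w 0 = 0` and
`δ ∈ [0,1)`, the supremum over Borel probability measures `F` on `[0,1]` of
`(∫ w dF) / (1 − δ(1 − ∫ x dF))` equals the pointwise maximum of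
`w(x)/(1 − δ(1 − x))` over `[0,1]`; a maximizer exists, and for any pointwise
maximizer `x*` the Dirac measure at `x*` attains the supremum. -/
theorem stmt13
    (w : ℝ → ℝ)
    (hcont : ContinuousOn w (Icc (0:ℝ) 1))
    (hmap : ∀ x ∈ Icc (0:ℝ) 1, w x ∈ Icc (0:ℝ) 1)
    (h0 : w 0 = 0)
    (δ : ℝ) (hδ : δ ∈ Ico (0:ℝ) 1) :
    (∃ xs ∈ Icc (0:ℝ) 1, ∀ x ∈ Icc (0:ℝ) 1,
      w x / (1 - δ * (1 - x)) ≤ w xs / (1 - δ * (1 - xs))) ∧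
    ∀ xs ∈ Icc (0:ℝ) 1,
      (∀ x ∈ Icc (0:ℝ) 1, w x / (1 - δ * (1 - x)) ≤ w xs / (1 - δ * (1 - xs))) →
      IsGreatest
        {r : ℝ | ∃ F : Measure ℝ, IsProbabilityMeasure F ∧ F (Icc (0:ℝ) 1)ᶜ = 0 ∧
          r = (∫ x, w x ∂F) / (1 - δ * (1 - ∫ x, x ∂F))}
        (w xs / (1 - δ * (1 - xs))) ∧
      (∫ x, w x ∂(Measure.dirac xs)) / (1 - δ * (1 - ∫ x, x ∂(Measure.dirac xs)))
        = w xs / (1 - δ * (1 - xs)) := by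
  obtain ⟨hδ0, hδ1⟩ := hδ
  -- denominator positivity
  have hden : ∀ x : ℝ, 0 ≤ x → 0 < 1 - δ * (1 - x) := by
    intro x hx
    nlinarith
  constructor
  · -- existence of maximizer
    have hcont' : ContinuousOn (fun x => w x / (1 - δ * (1 - x))) (Icc (0:ℝ) 1) := by
      apply hcont.div
      · fun_prop
      · intro x hx
        exact ne_of_gt (hden x hx.1)
    obtain ⟨xs, hxs, hmax⟩ :=
      isCompact_Icc.exists_isMaxOn (nonempty_Icc.2 (by norm_num)) hcont'
    exact ⟨xs, hxs, fun x hx => hmax hx⟩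
  · intro xs hxs hmax
    have hdxs : 0 < 1 - δ * (1 - xs) := hden xs hxs.1
    set M := w xs / (1 - δ * (1 - xs)) with hM
    have hM0 : 0 ≤ M := by
      have := hmax 0 (by norm_num)
      rw [h0] at this
      simpa using this
    have hdirac : (∫ x, w x ∂(Measure.dirac xs)) /
        (1 - δ * (1 - ∫ x, x ∂(Measure.dirac xs))) = M := by
      rw [integral_dirac w xs, integral_dirac (fun x => x) xs]
    refine ⟨⟨⟨Measure.dirac xs, inferInstance, ?_, hdirac.symm⟩, ?_⟩, hdirac⟩
    · rw [Measure.dirac_apply' _ (measurableSet_Icc.compl)]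
      simp [hxs]
    · rintro r ⟨F, hF, hFc, rfl⟩
      have hae : ∀ᵐ x ∂F, x ∈ Icc (0:ℝ) 1 := by
        rw [Filter.eventually_iff, mem_ae_iff]
        exact hFc
      have hrestr : F.restrict (Icc (0:ℝ) 1) = F :=
        Measure.restrict_eq_self_of_ae_mem hae
      have hwm : AEStronglyMeasurable w F := by
        rw [← hrestr]
        exact hcont.aestronglyMeasurable measurableSet_Icc
      have hwint : Integrable w F := by
        refine (integrable_const (1:ℝ)).mono' hwm ?_
        filter_upwards [hae] with x hx
        have := hmap x hx
        rw [Real.norm_eq_abs, abs_of_nonneg this.1]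
        exact this.2
      have hxint : Integrable (fun x : ℝ => x) F := by
        refine (integrable_const (1:ℝ)).mono' aestronglyMeasurable_id ?_
        filter_upwards [hae] with x hx
        rw [Real.norm_eq_abs, abs_of_nonneg hx.1]
        exact hx.2
      have hm0 : 0 ≤ ∫ x, x ∂F :=
        integral_nonneg_of_ae (by filter_upwards [hae] with x hx using hx.1)
      have hD : 0 < 1 - δ * (1 - ∫ x, x ∂F) := hden _ hm0
      rw [div_le_iff₀ hD]
      have hpt : ∀ᵐ x ∂F, w x ≤ M * (1 - δ) + M * δ * x := by
        filter_upwards [hae] with x hx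
        have h1 : w x / (1 - δ * (1 - x)) ≤ M := hmax x hx
        have h2 : 0 < 1 - δ * (1 - x) := hden x hx.1
        have := (div_le_iff₀ h2).mp h1
        nlinarith
      have hint2 : Integrable (fun x : ℝ => M * (1 - δ) + M * δ * x) F :=
        (integrable_const _).add (hxint.const_mul _)
      calc ∫ x, w x ∂F ≤ ∫ x, (M * (1 - δ) + M * δ * x) ∂F :=
            integral_mono_ae hwint hint2 hpt
        _ = M * (1 - δ) + M * δ * ∫ x, x ∂F := by
            rw [integral_add (integrable_const _) (hxint.const_mul _),
              integral_const, integral_const_mul]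
            simp
        _ = M * (1 - δ * (1 - ∫ x, x ∂F)) := by ring
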